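/- With f(x) = x(x-1)(x-λ), P_0 = (1/2)f', and P_{k+1} = P_k'·f + (1/2 - k)·P_k·f', the polynomial P_k, viewed as a polynomial in the two variables x and λ, has degree exactly k+1 in λ for every k ≥ 0. -/
import Mathlib


open MvPolynomial

/-- `f(x) = x(x-1)(x-λ)`, with `X 0 = x` and `X 1 = λ`. -/
noncomputable def legendreF : MvPolynomial (Fin 2) ℚ :=
  X 0 * (X 0 - 1) * (X 0 - X 1)

/-- The basic inflection polynomials `P_k = P_{1,k}`. -/
noncomputable def inflP : ℕ → MvPolynomial (Fin 2) ℚ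
  | 0 => C (1/2 : ℚ) * pderiv 0 legendreF
  | k + 1 =>
      pderiv 0 (inflP k) * legendreF +
        C ((1/2 : ℚ) - (k : ℚ)) * (inflP k * pderiv 0 legendreF)

/-- Evaluation `x ↦ 0`, `λ ↦ T`. -/
noncomputable def psiEv : MvPolynomial (Fin 2) ℚ →ₐ[ℚ] Polynomial ℚ :=
  aeval ![0, Polynomial.X]

lemma degreeOf_monomial_le {σ : Type*} (i : σ) (s : σ →₀ ℕ) (a : ℚ) :
    degreeOf i (monomial s a : MvPolynomial σ ℚ) ≤ s i := by
  rw [degreeOf_le_iff]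
  intro m hm
  classical
  rcases Finset.mem_singleton.mp (support_monomial_subset hm) with rfl
  exact le_rfl

lemma degreeOf_pderiv_le (p : MvPolynomial (Fin 2) ℚ) :
    degreeOf 1 (pderiv 0 p) ≤ degreeOf 1 p := by
  conv_lhs => rw [p.as_sum]
  rw [map_sum]
  refine (degreeOf_sum_le _ _ _).trans (Finset.sup_le fun s hs => ?_)
  rw [pderiv_monomial]
  refine (degreeOf_monomial_le _ _ _).trans ?_
  refine le_trans ?_ (monomial_le_degreeOf 1 hs)
  simp [Finsupp.tsub_apply]

lemma natDegree_psiEv_le (p : MvPolynomial (Fin 2) ℚ) :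
    (psiEv p).natDegree ≤ degreeOf 1 p := by
  have hrw : psiEv p = ∑ s ∈ p.support, psiEv (monomial s (coeff s p)) := by
    rw [← map_sum, ← p.as_sum]
  rw [hrw]
  refine Polynomial.natDegree_sum_le_of_forall_le _ _ fun s hs => ?_
  refine le_trans ?_ (monomial_le_degreeOf 1 hs)
  rw [psiEv, aeval_monomial]
  rw [Finsupp.prod_fintype _ _ (fun i => pow_zero _), Fin.prod_univ_two]
  refine (Polynomial.natDegree_mul_le).trans ?_
  simp only [Matrix.cons_val_zero, Matrix.cons_val_one, Matrix.head_cons]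
  rcases Nat.eq_zero_or_pos (s 0) with h | h
  · simp [h, Polynomial.algebraMap_eq, Polynomial.natDegree_X_pow,
      Polynomial.natDegree_mul_le]
  · simp [zero_pow h.ne', Polynomial.algebraMap_eq]

lemma psiEv_legendreF : psiEv legendreF = 0 := by
  simp [psiEv, legendreF]

lemma psiEv_pderiv_legendreF : psiEv (pderiv 0 legendreF) = Polynomial.X := by
  have h : pderiv 0 legendreF =
      (X 0 - 1) * (X 0 - X 1) + X 0 * (X 0 - X 1) + X 0 * (X 0 - 1) := by
    simp only [legendreF, pderiv_mul, map_sub, pderiv_X_self, pderiv_one,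
      pderiv_X_of_ne (show (1 : Fin 2) ≠ 0 by decide), pderiv_C]
    ring
  rw [h]
  simp only [psiEv, map_add, map_mul, map_sub, map_one, aeval_X]
  simp

/-- the leading coefficient sequence -/
noncomputable def dSeq : ℕ → ℚ
  | 0 => 1/2
  | k + 1 => ((1:ℚ)/2 - (k : ℚ)) * dSeq k

lemma dSeq_ne_zero (k : ℕ) : dSeq k ≠ 0 := by
  induction k with
  | zero => norm_num [dSeq]
  | succ k ih =>
      have h : (1:ℚ)/2 - (k : ℚ) ≠ 0 := by
        intro h
        have h2 : ((2 * k : ℕ) : ℚ) = ((1 : ℕ) : ℚ) := by push_cast; linarith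
        have := Nat.cast_injective (R := ℚ) h2
        omega
      simpa [dSeq] using mul_ne_zero h ih

lemma psiEv_C (a : ℚ) : psiEv (C a) = Polynomial.C a := by
  simp [psiEv]

lemma psiEv_inflP (k : ℕ) :
    psiEv (inflP k) = Polynomial.C (dSeq k) * Polynomial.X ^ (k + 1) := by
  induction k with
  | zero =>
      rw [inflP, map_mul, psiEv_pderiv_legendreF, psiEv_C]
      rw [show dSeq 0 = 1/2 from rfl]
      ring
  | succ k ih =>
      rw [inflP, map_add, map_mul, map_mul, map_mul, psiEv_legendreF,
        psiEv_pderiv_legendreF, ih, psiEv_C]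
      rw [show dSeq (k+1) = ((1:ℚ)/2 - (k : ℚ)) * dSeq k from rfl]
      rw [map_mul]
      ring

lemma degreeOf_inflP_le (k : ℕ) : degreeOf 1 (inflP k) ≤ k + 1 := by
  have hX0 : degreeOf 1 (X 0 : MvPolynomial (Fin 2) ℚ) = 0 := by
    rw [degreeOf_X]; decide
  have hX1 : degreeOf 1 (X 1 : MvPolynomial (Fin 2) ℚ) = 1 := by
    rw [degreeOf_X]; decide
  have hone : degreeOf 1 (1 : MvPolynomial (Fin 2) ℚ) = 0 := by
    rw [← C_1]; exact degreeOf_C _ _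
  have hF : degreeOf 1 legendreF ≤ 1 := by
    rw [legendreF]
    refine (degreeOf_mul_le _ _ _).trans ?_
    have h1 : degreeOf 1 (X 0 * (X 0 - 1) : MvPolynomial (Fin 2) ℚ) ≤ 0 := by
      refine (degreeOf_mul_le _ _ _).trans ?_
      have h2 : degreeOf 1 (X 0 - 1 : MvPolynomial (Fin 2) ℚ) ≤ 0 := by
        refine (degreeOf_sub_le _ _ _).trans ?_
        omega
      omega
    have h3 : degreeOf 1 (X 0 - X 1 : MvPolynomial (Fin 2) ℚ) ≤ 1 := by
      refine (degreeOf_sub_le _ _ _).trans ?_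
      omega
    omega
  have hF' : degreeOf 1 (pderiv 0 legendreF) ≤ 1 :=
    (degreeOf_pderiv_le _).trans hF
  induction k with
  | zero =>
      rw [inflP]
      refine (degreeOf_mul_le _ _ _).trans ?_
      have := degreeOf_C (1/2 : ℚ) (1 : Fin 2)
      omega
  | succ k ih =>
      rw [inflP]
      refine (degreeOf_add_le _ _ _).trans (max_le ?_ ?_)
      · refine (degreeOf_mul_le _ _ _).trans ?_
        have := (degreeOf_pderiv_le (inflP k)).trans ih
        omega
      · refine (degreeOf_mul_le _ _ _).trans ?_
        have h2 : degreeOf 1 (inflP k * pderiv 0 legendreF) ≤ (k+1) + 1 := by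
          refine (degreeOf_mul_le _ _ _).trans ?_
          omega
        have := degreeOf_C ((1/2 : ℚ) - (k : ℚ)) (1 : Fin 2)
        omega

theorem degree_lambda_inflP (k : ℕ) : degreeOf 1 (inflP k) = k + 1 := by
  refine le_antisymm (degreeOf_inflP_le k) ?_
  have h := natDegree_psiEv_le (inflP k)
  rw [psiEv_inflP] at h
  rwa [Polynomial.natDegree_C_mul (dSeq_ne_zero k), Polynomial.natDegree_X_pow] at h
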